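/- Let ξ, A > 0 with ξ·A < 1. The function R_{b1,min}(ξ) = −log₂(1 − ξ·A) is strictly increasing in ξ on (0, 1/A), and for fixed γ̄_b > 0 the function R_{b1,0}(ξ) = log₂((exp(W₀(ξ·A·γ̄_b)) − 1)/(ξ·A)) is strictly decreasing in ξ on (0, 1/A). -/

import Mathlib

open Real

lemma aux_anti_14 : StrictAntiOn (fun w : ℝ => (1 - Real.exp (-w)) / w) (Set.Ioi 0) := by
  apply strictAntiOn_of_deriv_neg (convex_Ioi 0)
  · apply ContinuousOn.div
    · exact (continuous_const.sub (Real.continuous_exp.comp continuous_neg)).continuousOn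
    · exact continuous_id.continuousOn
    · intro x hx; exact ne_of_gt (by simpa using hx)
  · intro w hw
    rw [interior_Ioi] at hw
    have hw0 : (0:ℝ) < w := hw
    have h1 : HasDerivAt (fun w : ℝ => 1 - Real.exp (-w)) (Real.exp (-w)) w := by
      have h₀ : HasDerivAt (fun w : ℝ => Real.exp (-w)) (-Real.exp (-w)) w := by
        simpa [Function.comp_def] using (Real.hasDerivAt_exp (-w)).comp w (hasDerivAt_neg w)
      simpa [Pi.sub_def] using (hasDerivAt_const w (1:ℝ)).sub h₀
    have h2 : HasDerivAt (fun w : ℝ => w) 1 w := hasDerivAt_id w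
    have hd : HasDerivAt (fun w : ℝ => (1 - Real.exp (-w)) / w)
        ((Real.exp (-w) * w - (1 - Real.exp (-w)) * 1) / w ^ 2) w :=
      h1.div h2 (ne_of_gt hw0)
    rw [hd.deriv]
    apply div_neg_of_neg_of_pos _ (by positivity)
    have hlt : w + 1 < Real.exp w := Real.add_one_lt_exp (ne_of_gt hw0)
    have hmul : Real.exp (-w) * Real.exp w = 1 := by
      rw [← Real.exp_add]; simp
    nlinarith [Real.exp_pos (-w), Real.exp_pos w]

theorem stmt_14 (A γb : ℝ) (hA : 0 < A) (hγb : 0 < γb)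
    (W : ℝ → ℝ) (hW : ∀ t : ℝ, 0 ≤ t → 0 ≤ W t ∧ W t * Real.exp (W t) = t) :
    (∀ ξ₁ ξ₂ : ℝ, 0 < ξ₁ → ξ₁ < ξ₂ → ξ₂ * A < 1 →
      -Real.logb 2 (1 - ξ₁ * A) < -Real.logb 2 (1 - ξ₂ * A)) ∧
    (∀ ξ₁ ξ₂ : ℝ, 0 < ξ₁ → ξ₁ < ξ₂ → ξ₂ * A < 1 →
      Real.logb 2 ((Real.exp (W (ξ₂ * A * γb)) - 1) / (ξ₂ * A)) <
        Real.logb 2 ((Real.exp (W (ξ₁ * A * γb)) - 1) / (ξ₁ * A))) := by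
  constructor
  · intro ξ₁ ξ₂ h1 h12 h2A
    have hlt : ξ₁ * A < ξ₂ * A := by nlinarith
    have hpos : 0 < 1 - ξ₂ * A := by linarith
    have := Real.logb_lt_logb one_lt_two hpos (by linarith : 1 - ξ₂ * A < 1 - ξ₁ * A)
    linarith
  · intro ξ₁ ξ₂ h1 h12 h2A
    have h2 : 0 < ξ₂ := lt_trans h1 h12
    have ht1 : 0 < ξ₁ * A * γb := by positivity
    have ht2 : 0 < ξ₂ * A * γb := by positivity
    have htlt : ξ₁ * A * γb < ξ₂ * A * γb := by nlinarith
    obtain ⟨hw1nn, hw1e⟩ := hW _ ht1.le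
    obtain ⟨hw2nn, hw2e⟩ := hW _ ht2.le
    set w₁ := W (ξ₁ * A * γb) with hw₁def
    set w₂ := W (ξ₂ * A * γb) with hw₂def
    have hw1pos : 0 < w₁ := by
      rcases hw1nn.lt_or_eq with h | h
      · exact h
      · exfalso; rw [← h, zero_mul] at hw1e; linarith
    have hw2pos : 0 < w₂ := by
      rcases hw2nn.lt_or_eq with h | h
      · exact h
      · exfalso; rw [← h, zero_mul] at hw2e; linarith
    have hwlt : w₁ < w₂ := by
      by_contra hl
      push_neg at hl
      have := Real.exp_le_exp.2 hl
      have : w₂ * Real.exp w₂ ≤ w₁ * Real.exp w₁ :=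
        mul_le_mul hl this (Real.exp_pos _).le hw1nn
      rw [hw1e, hw2e] at this
      linarith
    -- identity: (exp w - 1)/(ξ A) = γb * ((1 - exp(-w))/w)
    have key : ∀ (ξ : ℝ) (w : ℝ), 0 < ξ → 0 < w → w * Real.exp w = ξ * A * γb →
        (Real.exp w - 1) / (ξ * A) = γb * ((1 - Real.exp (-w)) / w) := by
      intro ξ w hξ hwp he
      have hξA : 0 < ξ * A := by positivity
      have hne : Real.exp w ≠ 0 := (Real.exp_pos w).ne'
      rw [Real.exp_neg]
      field_simp
      nlinarith [Real.exp_pos w]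
    have k1 := key ξ₁ w₁ h1 hw1pos hw1e
    have k2 := key ξ₂ w₂ h2 hw2pos hw2e
    rw [k1, k2]
    have hanti : (1 - Real.exp (-w₂)) / w₂ < (1 - Real.exp (-w₁)) / w₁ :=
      aux_anti_14 (Set.mem_Ioi.2 hw1pos) (Set.mem_Ioi.2 hw2pos) hwlt
    have hpos2 : 0 < (1 - Real.exp (-w₂)) / w₂ := by
      apply div_pos _ hw2pos
      have : Real.exp (-w₂) < 1 := Real.exp_lt_one_iff.2 (by linarith)
      linarith
    exact Real.logb_lt_logb one_lt_two (by positivity) (by nlinarith)
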